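/- arXiv:2403.08894 — 6 statements merged into one kernel-verified Lean document; each statement's English description precedes it below -/
import Mathlib

section
/- Let E, A ∈ ℂ^{n×n}, b ∈ ℂ^n, and let V, W ∈ ℂ^{n×r} be such that the reduced pencil matrix W^H (z E − A) V ∈ ℂ^{r×r} is invertible for a point z ∈ ℂ at which zE − A is invertible. If (zE − A)^{-1} b ∈ range(V), then V v = (zE − A)^{-1} b, where v := (W^H(zE − A)V)^{-1} W^H b is the reduced resolvent solution. (Projection identity for interpolatory model reduction.) -/
open Matrix

/-- projection identity: If `(zE − A)⁻¹ b ∈ range(V)` and the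
reduced pencil `Wᴴ(zE − A)V` is invertible, then
`V v = (zE − A)⁻¹ b` for `v = (Wᴴ(zE−A)V)⁻¹ Wᴴ b`. -/
theorem projection_identity_primal (n r : ℕ)
    (E A : Matrix (Fin n) (Fin n) ℂ) (b : Fin n → ℂ)
    (V W : Matrix (Fin n) (Fin r) ℂ) (z : ℂ)
    (hpencil : IsUnit (z • E - A).det)
    (hred : IsUnit (Wᴴ * (z • E - A) * V).det)
    (hrange : ∃ c : Fin r → ℂ, V.mulVec c = (z • E - A)⁻¹.mulVec b) :
    V.mulVec ((Wᴴ * (z • E - A) * V)⁻¹.mulVec (Wᴴ.mulVec b))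
      = (z • E - A)⁻¹.mulVec b := by
  obtain ⟨c, hc⟩ := hrange
  set P := z • E - A with hP
  have h1 : (Wᴴ * P * V).mulVec c = Wᴴ.mulVec b := by
    have : (Wᴴ * P * V).mulVec c = (Wᴴ * P).mulVec (V.mulVec c) := by
      rw [← Matrix.mulVec_mulVec]
    rw [this, hc, Matrix.mulVec_mulVec, Matrix.mul_assoc,
      Matrix.mul_nonsing_inv P hpencil, Matrix.mul_one]
  have h2 : (Wᴴ * P * V)⁻¹.mulVec (Wᴴ.mulVec b) = c := by
    rw [← h1, Matrix.mulVec_mulVec, Matrix.nonsing_inv_mul _ hred, Matrix.one_mulVec]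
  rw [h2, hc]
end

section
/- Let E, A, Q ∈ ℂ^{n×n} with Q Hermitian, b ∈ ℂ^n, and V, W ∈ ℂ^{n×r} such that for a point z ∈ ℂ both zE − A and W^H(zE − A)V are invertible, and moreover (zE − A)^{-H} Q (zE − A)^{-1} b ∈ range(W). Define w := (W^H(zE−A)V)^{-H} (V^H Q V) (W^H(zE−A)V)^{-1} W^H b. If additionally V V^H acts as the identity on (zE−A)^{-1}b (i.e., (zE−A)^{-1}b ∈ range(V) with V having orthonormal columns), then W w = (zE − A)^{-H} Q (zE − A)^{-1} b. -/
open Matrix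

/-- dual projection identity: Under range containment for `W`,
orthonormal columns of `V` with `(zE−A)⁻¹b ∈ range(V)`, and injectivity of `W`,
`W w = (zE − A)⁻ᴴ Q (zE − A)⁻¹ b` where
`w = (Wᴴ(zE−A)V)⁻ᴴ (Vᴴ Q V) (Wᴴ(zE−A)V)⁻¹ Wᴴ b`. -/
theorem projection_identity_dual (n r : ℕ)
    (E A Q : Matrix (Fin n) (Fin n) ℂ) (b : Fin n → ℂ) (hQ : Qᴴ = Q)
    (V W : Matrix (Fin n) (Fin r) ℂ) (z : ℂ)
    (hpencil : IsUnit (z • E - A).det)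
    (hred : IsUnit (Wᴴ * (z • E - A) * V).det)
    (hrangeW : ∃ c : Fin r → ℂ,
      W.mulVec c = ((z • E - A)ᴴ)⁻¹.mulVec (Q.mulVec ((z • E - A)⁻¹.mulVec b)))
    (hVorth : Vᴴ * V = 1)
    (hrangeV : ∃ c : Fin r → ℂ, V.mulVec c = (z • E - A)⁻¹.mulVec b)
    (hWinj : Function.Injective W.mulVec) :
    W.mulVec
        (((Wᴴ * (z • E - A) * V)ᴴ)⁻¹.mulVec
          ((Vᴴ * Q * V).mulVec
            ((Wᴴ * (z • E - A) * V)⁻¹.mulVec (Wᴴ.mulVec b))))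
      = ((z • E - A)ᴴ)⁻¹.mulVec (Q.mulVec ((z • E - A)⁻¹.mulVec b)) := by
  obtain ⟨c, hc⟩ := hrangeV
  obtain ⟨d, hd⟩ := hrangeW
  set S := z • E - A with hS
  have hSH : IsUnit Sᴴ.det := by
    rw [det_conjTranspose]; exact hpencil.star
  have hMH : IsUnit (Wᴴ * S * V)ᴴ.det := by
    rw [det_conjTranspose]; exact hred.star
  -- Step 1: (Wᴴ S V) c = Wᴴ b
  have h1 : (Wᴴ * S * V).mulVec c = Wᴴ.mulVec b := by
    calc (Wᴴ * S * V).mulVec c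
        = Wᴴ.mulVec (S.mulVec (V.mulVec c)) := by
          rw [mulVec_mulVec, mulVec_mulVec]
      _ = Wᴴ.mulVec (S.mulVec (S⁻¹.mulVec b)) := by rw [hc]
      _ = Wᴴ.mulVec b := by
          rw [mulVec_mulVec, mulVec_mulVec, Matrix.mul_assoc,
            mul_nonsing_inv _ hpencil, Matrix.mul_one]
  -- Step 2: (Wᴴ S V)⁻¹ Wᴴ b = c
  have h2 : (Wᴴ * S * V)⁻¹.mulVec (Wᴴ.mulVec b) = c := by
    rw [← h1, mulVec_mulVec, nonsing_inv_mul _ hred, one_mulVec]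
  -- Step 3: (Vᴴ Q V) c = Vᴴ Q S⁻¹ b
  have h3 : (Vᴴ * Q * V).mulVec c = Vᴴ.mulVec (Q.mulVec (S⁻¹.mulVec b)) := by
    rw [← hc, ← mulVec_mulVec, ← mulVec_mulVec]
  -- Step 4: (Wᴴ S V)ᴴ d = Vᴴ Q S⁻¹ b
  have h4 : (Wᴴ * S * V)ᴴ.mulVec d = Vᴴ.mulVec (Q.mulVec (S⁻¹.mulVec b)) := by
    have hT : (Wᴴ * S * V)ᴴ = Vᴴ * (Sᴴ * W) := by
      rw [conjTranspose_mul, conjTranspose_mul, conjTranspose_conjTranspose]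
    have hcancel : ∀ y : Fin n → ℂ, Sᴴ.mulVec (Sᴴ⁻¹.mulVec y) = y := fun y => by
      rw [mulVec_mulVec, mul_nonsing_inv _ hSH, one_mulVec]
    rw [hT, ← mulVec_mulVec, ← mulVec_mulVec, hd, hcancel]
  -- Conclude
  have hcancel2 : ((Wᴴ * S * V)ᴴ)⁻¹.mulVec ((Wᴴ * S * V)ᴴ.mulVec d) = d := by
    rw [mulVec_mulVec, nonsing_inv_mul _ hMH, one_mulVec]
  rw [h2, h3, ← h4, hcancel2, hd]
end

section
/- (Lagrange interpolation via Galerkin projection) Let E, A, Q ∈ ℂ^{n×n} with Q Hermitian, b ∈ ℂ^n, and let z ∈ ℂ be such that zE − A is invertible. Let V, W ∈ ℂ^{n×r} with W^H(zE−A)V invertible and (zE − A)^{-1} b ∈ range(V). Define the reduced model Ê = W^H E V, Â = W^H A V, Q̂ = V^H Q V, b̂ = W^H b, and the transfer functions H(z) = b^H (zE−A)^{-H} Q (zE−A)^{-1} b and Ĥ(z) = b̂^H (zÊ−Â)^{-H} Q̂ (zÊ−Â)^{-1} b̂. Then Ĥ(z) = H(z). -/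
open Matrix

lemma dot_conjT_aux {m k : ℕ} (M : Matrix (Fin m) (Fin k) ℂ) (u : Fin k → ℂ)
    (w : Fin m → ℂ) : star u ⬝ᵥ Mᴴ.mulVec w = star (M.mulVec u) ⬝ᵥ w := by
  rw [dotProduct_mulVec, star_mulVec]

/-- Lagrange interpolation via Galerkin projection: If
`(zE − A)⁻¹ b ∈ range(V)` and `Wᴴ(zE−A)V` is invertible, then the reduced
quadratic-output transfer function matches the full one at `z`: `Ĥ(z) = H(z)`. -/
theorem lagrange_interpolation_quadratic_output (n r : ℕ)
    (E A Q : Matrix (Fin n) (Fin n) ℂ) (b : Fin n → ℂ) (hQ : Qᴴ = Q)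
    (V W : Matrix (Fin n) (Fin r) ℂ) (z : ℂ)
    (hpencil : IsUnit (z • E - A).det)
    (hred : IsUnit (Wᴴ * (z • E - A) * V).det)
    (hrange : ∃ c : Fin r → ℂ, V.mulVec c = (z • E - A)⁻¹.mulVec b)
    (Ehat Ahat Qhat : Matrix (Fin r) (Fin r) ℂ) (bhat : Fin r → ℂ)
    (hE : Ehat = Wᴴ * E * V) (hA : Ahat = Wᴴ * A * V)
    (hQhat : Qhat = Vᴴ * Q * V) (hb : bhat = Wᴴ.mulVec b) :
    star bhat ⬝ᵥ
        (((z • Ehat - Ahat)ᴴ)⁻¹ * Qhat * (z • Ehat - Ahat)⁻¹).mulVec bhat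
      = star b ⬝ᵥ (((z • E - A)ᴴ)⁻¹ * Q * (z • E - A)⁻¹).mulVec b := by
  obtain ⟨c, hc⟩ := hrange
  set M := z • E - A with hMdef
  have hMh : z • Ehat - Ahat = Wᴴ * M * V := by
    subst hE hA
    rw [hMdef, Matrix.mul_sub, Matrix.sub_mul, Matrix.mul_smul, Matrix.smul_mul]
  set N := Wᴴ * M * V with hNdef
  have hbh : N.mulVec c = bhat := by
    rw [hb, hNdef, ← Matrix.mulVec_mulVec, hc, Matrix.mulVec_mulVec,
      Matrix.mul_assoc, Matrix.mul_nonsing_inv _ hpencil, Matrix.mul_one]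
  have hNi : N⁻¹.mulVec bhat = c := by
    rw [← hbh, Matrix.mulVec_mulVec, Matrix.nonsing_inv_mul _ hred,
      Matrix.one_mulVec]
  rw [hMh, ← Matrix.mulVec_mulVec, ← Matrix.mulVec_mulVec, hNi,
    ← Matrix.conjTranspose_nonsing_inv, dot_conjT_aux, hNi, hQhat,
    ← Matrix.mulVec_mulVec, ← Matrix.mulVec_mulVec, dot_conjT_aux, hc,
    ← Matrix.mulVec_mulVec, ← Matrix.mulVec_mulVec,
    ← Matrix.conjTranspose_nonsing_inv, dot_conjT_aux]
end

section
/- (Hermite interpolation via Petrov–Galerkin projection) Let E, A, Q ∈ ℂ^{n×n} with Q Hermitian, b ∈ ℂ^n, and z₀ = iω₀ ∈ iℝ with z₀E − A invertible. Let V, W ∈ ℂ^{n×r} be such that W^H(z₀E−A)V is invertible, (z₀E − A)^{-1} b ∈ range(V), and (z₀E − A)^{-H} Q (z₀E − A)^{-1} b ∈ range(W); assume V has orthonormal columns and W has full column rank. Define the reduced model Ê = W^H E V, Â = W^H A V, Q̂ = V^H Q V, b̂ = W^H b, and the transfer functions H(iω) = b^H(iωE−A)^{-H}Q(iωE−A)^{-1}b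 and Ĥ(iω) analogously. Then both H(iω₀) = Ĥ(iω₀) and (d/dω)H(iω)|_{ω=ω₀} = (d/dω)Ĥ(iω)|_{ω=ω₀}. -/
open Matrix

lemma star_dot_conjT_mulVec {p q : ℕ} (A : Matrix (Fin p) (Fin q) ℂ)
    (x : Fin q → ℂ) (y : Fin p → ℂ) :
    star x ⬝ᵥ Aᴴ.mulVec y = star (A.mulVec x) ⬝ᵥ y := by
  rw [Matrix.dotProduct_mulVec, ← Matrix.star_mulVec]


lemma star_conjT_mulVec_dot {p q : ℕ} (A : Matrix (Fin p) (Fin q) ℂ)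
    (y : Fin p → ℂ) (u : Fin q → ℂ) :
    star (Aᴴ.mulVec y) ⬝ᵥ u = star y ⬝ᵥ A.mulVec u := by
  have h := star_dot_conjT_mulVec Aᴴ y u
  rw [conjTranspose_conjTranspose] at h
  exact h.symm

section
attribute [local instance] Matrix.linftyOpNormedAddCommGroup Matrix.linftyOpNormedRing
  Matrix.linftyOpNormedAlgebra

lemma pencil_hasDerivAt (m : ℕ) (E A : Matrix (Fin m) (Fin m) ℂ) (ω₀ : ℝ) :
    HasDerivAt (fun ω : ℝ => (Complex.I * ω) • E - A) (Complex.I • E) ω₀ := by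
  have h0 := ((Complex.ofRealCLM.hasDerivAt (x := ω₀)).const_mul Complex.I).smul_const E
  have h1 := h0.sub_const A
  simp only [Complex.ofRealCLM_apply, Complex.ofReal_one, mul_one] at h1
  exact h1

lemma pencilInv_hasDerivAt (m : ℕ) (E A : Matrix (Fin m) (Fin m) ℂ) (ω₀ : ℝ)
    (hp : IsUnit ((Complex.I * ω₀) • E - A).det) :
    HasDerivAt (fun ω : ℝ => Ring.inverse ((Complex.I * ω) • E - A))
      (-(((Complex.I * ω₀) • E - A)⁻¹ * (Complex.I • E) * ((Complex.I * ω₀) • E - A)⁻¹)) ω₀ := by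
  obtain ⟨u, hu⟩ := (Matrix.isUnit_iff_isUnit_det _).mpr hp
  have hinv : (↑u⁻¹ : Matrix (Fin m) (Fin m) ℂ) = ((Complex.I * ω₀) • E - A)⁻¹ := by
    rw [Matrix.nonsing_inv_eq_ringInverse, ← hu, Ring.inverse_unit]
  have hf := hasFDerivAt_ringInverse (𝕜 := ℝ) (R := Matrix (Fin m) (Fin m) ℂ) u
  rw [hu] at hf
  have h := hf.comp_hasDerivAt ω₀ (pencil_hasDerivAt m E A ω₀)
  simp [hinv, ContinuousLinearMap.mulLeftRight_apply, Function.comp_def] at h ⊢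
  exact h

/-- the quadratic form `X ↦ bᴴ X b` as a continuous linear map -/
noncomputable def quadCLM (m : ℕ) (b : Fin m → ℂ) :
    Matrix (Fin m) (Fin m) ℂ →L[ℂ] ℂ :=
  LinearMap.toContinuousLinearMap
    { toFun := fun X => star b ⬝ᵥ X.mulVec b
      map_add' := fun X Y => by simp [Matrix.add_mulVec]
      map_smul' := fun c X => by simp [Matrix.smul_mulVec] }

@[simp] lemma quadCLM_apply (m : ℕ) (b : Fin m → ℂ) (X : Matrix (Fin m) (Fin m) ℂ) :
    quadCLM m b X = star b ⬝ᵥ X.mulVec b := rfl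

lemma keyDeriv (m : ℕ) (E A Q : Matrix (Fin m) (Fin m) ℂ) (b : Fin m → ℂ) (hQ : Qᴴ = Q)
    (ω₀ : ℝ) (hp : IsUnit ((Complex.I * ω₀) • E - A).det) :
    HasDerivAt (fun ω : ℝ => star b ⬝ᵥ
        (((((Complex.I * ω) • E - A)ᴴ)⁻¹ * Q * ((Complex.I * ω) • E - A)⁻¹)).mulVec b)
      (Complex.I * (star ((((Complex.I * ω₀) • E - A)⁻¹).mulVec b) ⬝ᵥ
          Eᴴ.mulVec (((((Complex.I * ω₀) • E - A)ᴴ)⁻¹).mulVec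
            (Q.mulVec ((((Complex.I * ω₀) • E - A)⁻¹).mulVec b))))
        - Complex.I * (star (((((Complex.I * ω₀) • E - A)ᴴ)⁻¹).mulVec
            (Q.mulVec ((((Complex.I * ω₀) • E - A)⁻¹).mulVec b))) ⬝ᵥ
          E.mulVec ((((Complex.I * ω₀) • E - A)⁻¹).mulVec b))) ω₀ := by
  -- conjugate-transposed pencil
  have hNeq : ∀ ω : ℝ, ((Complex.I * ω) • E - A)ᴴ = (Complex.I * ω) • (-Eᴴ) - Aᴴ := by
    intro ω
    rw [Matrix.conjTranspose_sub, Matrix.conjTranspose_smul]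
    congr 1
    rw [smul_neg, ← neg_smul]
    congr 1
    simp [Complex.ext_iff]
  have hpN : IsUnit ((Complex.I * ω₀) • (-Eᴴ) - Aᴴ).det := by
    rw [← hNeq, Matrix.det_conjTranspose]
    exact hp.star
  have hM := pencilInv_hasDerivAt m E A ω₀ hp
  have hN := pencilInv_hasDerivAt m (-Eᴴ) Aᴴ ω₀ hpN
  have hprod := (hN.mul_const Q).mul hM
  have hfull := ((quadCLM m b).restrictScalars ℝ).hasFDerivAt.comp_hasDerivAt ω₀ hprod
  -- identify the function
  have hfun : ((quadCLM m b).restrictScalars ℝ ∘ fun y : ℝ =>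
        Ring.inverse ((Complex.I * y) • (-Eᴴ) - Aᴴ) * Q *
          Ring.inverse ((Complex.I * y) • E - A))
      = fun ω : ℝ => star b ⬝ᵥ
        (((((Complex.I * ω) • E - A)ᴴ)⁻¹ * Q * ((Complex.I * ω) • E - A)⁻¹)).mulVec b := by
    funext ω
    simp only [Function.comp_apply, hNeq ω, Matrix.nonsing_inv_eq_ringInverse]
    rfl
  simp only [Pi.mul_def] at hfull
  rw [hfun] at hfull
  convert hfull using 1
  case e'_4 => rfl
  have hPH : (((Complex.I * ω₀) • E - A)ᴴ)⁻¹ = (((Complex.I * ω₀) • E - A)⁻¹)ᴴ :=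
    (Matrix.conjTranspose_nonsing_inv _).symm
  have hQdot : ∀ (x y : Fin m → ℂ), star (Q.mulVec x) ⬝ᵥ y = star x ⬝ᵥ Q.mulVec y := by
    intro x y
    conv_lhs => rw [← hQ]
    exact star_conjT_mulVec_dot Q x y
  erw [ContinuousLinearMap.coe_restrictScalars']
  simp only [ContinuousLinearMap.coe_restrictScalars', quadCLM_apply,
    ← Matrix.nonsing_inv_eq_ringInverse, ← hNeq ω₀, hPH]
  simp only [Matrix.add_mulVec, Matrix.neg_mul, Matrix.mul_neg, Matrix.neg_mulVec, neg_neg,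
    ← Matrix.mulVec_mulVec, Matrix.smul_mulVec, Matrix.mulVec_neg,
    dotProduct_add, dotProduct_neg, dotProduct_smul, smul_eq_mul, Matrix.mulVec_smul,
    star_dot_conjT_mulVec, star_conjT_mulVec_dot, hQdot]
  ring

lemma keyValue {m : ℕ} (M Q : Matrix (Fin m) (Fin m) ℂ) (b : Fin m → ℂ) :
    star b ⬝ᵥ ((Mᴴ⁻¹ * Q * M⁻¹)).mulVec b
      = star (M⁻¹.mulVec b) ⬝ᵥ Q.mulVec (M⁻¹.mulVec b) := by
  rw [← Matrix.conjTranspose_nonsing_inv]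
  simp only [← Matrix.mulVec_mulVec]
  rw [star_dot_conjT_mulVec]

/-- Hermite interpolation via Petrov–Galerkin projection:
under the two range containments at `z₀ = iω₀`, with `V` orthonormal and `W`
injective, the reduced transfer function matches the full one at `z₀` in value
and in derivative along the imaginary axis. -/
theorem hermite_interpolation_quadratic_output (n r : ℕ)
    (E A Q : Matrix (Fin n) (Fin n) ℂ) (b : Fin n → ℂ) (hQ : Qᴴ = Q)
    (ω₀ : ℝ) (hpencil : IsUnit ((Complex.I * ω₀) • E - A).det)
    (V W : Matrix (Fin n) (Fin r) ℂ)
    (hred : IsUnit (Wᴴ * ((Complex.I * ω₀) • E - A) * V).det)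
    (hrangeV : ∃ c : Fin r → ℂ,
      V.mulVec c = (((Complex.I * ω₀) • E - A)⁻¹).mulVec b)
    (hrangeW : ∃ c : Fin r → ℂ,
      W.mulVec c = ((((Complex.I * ω₀) • E - A)ᴴ)⁻¹).mulVec
        (Q.mulVec ((((Complex.I * ω₀) • E - A)⁻¹).mulVec b)))
    (hVorth : Vᴴ * V = 1) (hWinj : Function.Injective W.mulVec)
    (Ehat Ahat Qhat : Matrix (Fin r) (Fin r) ℂ) (bhat : Fin r → ℂ)
    (hE : Ehat = Wᴴ * E * V) (hA : Ahat = Wᴴ * A * V)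
    (hQhat : Qhat = Vᴴ * Q * V) (hb : bhat = Wᴴ.mulVec b)
    (H Hhat : ℝ → ℂ)
    (hH : ∀ ω : ℝ, H ω = star b ⬝ᵥ
      (((((Complex.I * ω) • E - A)ᴴ)⁻¹ * Q * ((Complex.I * ω) • E - A)⁻¹)).mulVec b)
    (hHhat : ∀ ω : ℝ, Hhat ω = star bhat ⬝ᵥ
      (((((Complex.I * ω) • Ehat - Ahat)ᴴ)⁻¹ * Qhat *
        ((Complex.I * ω) • Ehat - Ahat)⁻¹)).mulVec bhat) :
    H ω₀ = Hhat ω₀ ∧ deriv H ω₀ = deriv Hhat ω₀ := by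
  have hQhatH : Qhatᴴ = Qhat := by
    rw [hQhat]
    simp [Matrix.conjTranspose_mul, hQ, Matrix.mul_assoc]
  have hpH : IsUnit (((Complex.I * (ω₀:ℂ)) • E - A)ᴴ).det := by
    rw [Matrix.det_conjTranspose]; exact hpencil.star
  have hKhat : (Complex.I * (ω₀:ℂ)) • Ehat - Ahat
      = Wᴴ * ((Complex.I * (ω₀:ℂ)) • E - A) * V := by
    rw [hE, hA]
    simp only [Matrix.mul_sub, Matrix.sub_mul, Matrix.mul_smul, Matrix.smul_mul]
  have hredK : IsUnit ((Complex.I * (ω₀:ℂ)) • Ehat - Ahat).det := by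
    rw [hKhat]; exact hred
  have hredKH : IsUnit (((Complex.I * (ω₀:ℂ)) • Ehat - Ahat)ᴴ).det := by
    rw [Matrix.det_conjTranspose]; exact hredK.star
  have hKhatH : ((Complex.I * (ω₀:ℂ)) • Ehat - Ahat)ᴴ
      = Vᴴ * ((Complex.I * (ω₀:ℂ)) • E - A)ᴴ * W := by
    rw [hKhat]
    simp [Matrix.conjTranspose_mul, Matrix.mul_assoc]
  -- projection identity for v
  obtain ⟨c, hc⟩ := hrangeV
  have hMinv : ((Complex.I * (ω₀:ℂ)) • E - A) *ᵥ (((Complex.I * (ω₀:ℂ)) • E - A)⁻¹ *ᵥ b) = b := by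
    rw [Matrix.mulVec_mulVec, Matrix.mul_nonsing_inv _ hpencil, Matrix.one_mulVec]
  have hvc : ((Complex.I * (ω₀:ℂ)) • Ehat - Ahat)⁻¹ *ᵥ bhat = c := by
    have h1 : bhat = ((Complex.I * (ω₀:ℂ)) • Ehat - Ahat) *ᵥ c := by
      calc bhat = Wᴴ *ᵥ b := hb
        _ = Wᴴ *ᵥ (((Complex.I * (ω₀:ℂ)) • E - A) *ᵥ (V *ᵥ c)) := by rw [hc, hMinv]
        _ = (Wᴴ * ((Complex.I * (ω₀:ℂ)) • E - A) * V) *ᵥ c := by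
            rw [Matrix.mulVec_mulVec, Matrix.mulVec_mulVec]
        _ = ((Complex.I * (ω₀:ℂ)) • Ehat - Ahat) *ᵥ c := by rw [← hKhat]
    rw [h1, Matrix.mulVec_mulVec, Matrix.nonsing_inv_mul _ hredK, Matrix.one_mulVec]
  have hv : V *ᵥ (((Complex.I * (ω₀:ℂ)) • Ehat - Ahat)⁻¹ *ᵥ bhat)
      = ((Complex.I * (ω₀:ℂ)) • E - A)⁻¹ *ᵥ b := by rw [hvc, hc]
  -- projection identity for w
  obtain ⟨c₂, hc₂⟩ := hrangeW
  have hMHw : ((Complex.I * (ω₀:ℂ)) • E - A)ᴴ *ᵥ (W *ᵥ c₂)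
      = Q *ᵥ (((Complex.I * (ω₀:ℂ)) • E - A)⁻¹ *ᵥ b) := by
    rw [hc₂, Matrix.mulVec_mulVec, Matrix.mul_nonsing_inv _ hpH, Matrix.one_mulVec]
  have hwc : (((Complex.I * (ω₀:ℂ)) • Ehat - Ahat)ᴴ)⁻¹ *ᵥ
      (Qhat *ᵥ (((Complex.I * (ω₀:ℂ)) • Ehat - Ahat)⁻¹ *ᵥ bhat)) = c₂ := by
    have h2 : Qhat *ᵥ (((Complex.I * (ω₀:ℂ)) • Ehat - Ahat)⁻¹ *ᵥ bhat)
        = ((Complex.I * (ω₀:ℂ)) • Ehat - Ahat)ᴴ *ᵥ c₂ := by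
      calc Qhat *ᵥ (((Complex.I * (ω₀:ℂ)) • Ehat - Ahat)⁻¹ *ᵥ bhat)
          = Vᴴ *ᵥ (Q *ᵥ (V *ᵥ (((Complex.I * (ω₀:ℂ)) • Ehat - Ahat)⁻¹ *ᵥ bhat))) := by
            rw [hQhat]; simp only [← Matrix.mulVec_mulVec]
        _ = Vᴴ *ᵥ (Q *ᵥ (((Complex.I * (ω₀:ℂ)) • E - A)⁻¹ *ᵥ b)) := by rw [hv]
        _ = Vᴴ *ᵥ (((Complex.I * (ω₀:ℂ)) • E - A)ᴴ *ᵥ (W *ᵥ c₂)) := by rw [hMHw]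
        _ = (Vᴴ * ((Complex.I * (ω₀:ℂ)) • E - A)ᴴ * W) *ᵥ c₂ := by
            rw [Matrix.mulVec_mulVec, Matrix.mulVec_mulVec]
        _ = ((Complex.I * (ω₀:ℂ)) • Ehat - Ahat)ᴴ *ᵥ c₂ := by rw [← hKhatH]
    rw [h2, Matrix.mulVec_mulVec, Matrix.nonsing_inv_mul _ hredKH, Matrix.one_mulVec]
  have hw : W *ᵥ ((((Complex.I * (ω₀:ℂ)) • Ehat - Ahat)ᴴ)⁻¹ *ᵥ
        (Qhat *ᵥ (((Complex.I * (ω₀:ℂ)) • Ehat - Ahat)⁻¹ *ᵥ bhat)))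
      = (((Complex.I * (ω₀:ℂ)) • E - A)ᴴ)⁻¹ *ᵥ
        (Q *ᵥ (((Complex.I * (ω₀:ℂ)) • E - A)⁻¹ *ᵥ b)) := by rw [hwc, hc₂]
  constructor
  · -- value
    rw [hH ω₀, hHhat ω₀, keyValue, keyValue]
    rw [← hv, hQhat]
    simp only [← Matrix.mulVec_mulVec]
    rw [star_dot_conjT_mulVec]
  · -- derivative
    have hH' : H = fun ω : ℝ => star b ⬝ᵥ
        (((((Complex.I * ω) • E - A)ᴴ)⁻¹ * Q * ((Complex.I * ω) • E - A)⁻¹)).mulVec b :=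
      funext hH
    have hHhat' : Hhat = fun ω : ℝ => star bhat ⬝ᵥ
        (((((Complex.I * ω) • Ehat - Ahat)ᴴ)⁻¹ * Qhat *
          ((Complex.I * ω) • Ehat - Ahat)⁻¹)).mulVec bhat :=
      funext hHhat
    rw [hH', hHhat', (keyDeriv n E A Q b hQ ω₀ hpencil).deriv,
      (keyDeriv r Ehat Ahat Qhat bhat hQhatH ω₀ hredK).deriv]
    set v := ((Complex.I * (ω₀:ℂ)) • E - A)⁻¹ *ᵥ b with hvdef
    set w := (((Complex.I * (ω₀:ℂ)) • E - A)ᴴ)⁻¹ *ᵥ (Q *ᵥ v) with hwdef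
    set vh := ((Complex.I * (ω₀:ℂ)) • Ehat - Ahat)⁻¹ *ᵥ bhat with hvhdef
    set wh := (((Complex.I * (ω₀:ℂ)) • Ehat - Ahat)ᴴ)⁻¹ *ᵥ (Qhat *ᵥ vh) with hwhdef
    have e1 : star vh ⬝ᵥ Ehatᴴ *ᵥ wh = star v ⬝ᵥ Eᴴ *ᵥ w := by
      have hEH : Ehatᴴ = Vᴴ * Eᴴ * W := by
        rw [hE]; simp [Matrix.conjTranspose_mul, Matrix.mul_assoc]
      rw [hEH]
      simp only [← Matrix.mulVec_mulVec]
      rw [star_dot_conjT_mulVec V, hv, hw]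
    have e2 : star wh ⬝ᵥ Ehat *ᵥ vh = star w ⬝ᵥ E *ᵥ v := by
      rw [hE]
      simp only [← Matrix.mulVec_mulVec]
      rw [star_dot_conjT_mulVec W, hw, hv]
    rw [e1, e2]
end
end

section
/- (Tangential interpolation for linear-output systems) Let E, A ∈ ℂ^{n×n}, b ∈ ℂ^n, C ∈ ℂ^{p×n}, σ ∈ ℂ with σE − A invertible, and c ∈ ℂ^p a tangential direction. Let V, W ∈ ℂ^{n×r} with W^H(σE−A)V invertible. Define Ê = W^H E V, Â = W^H A V, b̂ = W^H b, Ĉ = C V, and the transfer functions G(s) = C(sE−A)^{-1}b and Ĝ(s) = Ĉ(sÊ−Â)^{-1}b̂. If (σE−A)^{-1}b ∈ range(V), then G(σ) = Ĝ(σ). If instead (σE−A)^{-H} C^H c ∈ range(W), then c^H G(σ) = c^H Ĝ(σ). -/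
open Matrix

/-- tangential interpolation for linear-output systems:
if `(σE−A)⁻¹b ∈ range(V)` then `G(σ) = Ĝ(σ)`; if `(σE−A)⁻ᴴ Cᴴ c ∈ range(W)`
then `cᴴ G(σ) = cᴴ Ĝ(σ)`. -/
theorem tangential_interpolation_linear_output (n r p : ℕ)
    (E A : Matrix (Fin n) (Fin n) ℂ) (b : Fin n → ℂ)
    (C : Matrix (Fin p) (Fin n) ℂ) (σ : ℂ) (c : Fin p → ℂ)
    (hpencil : IsUnit (σ • E - A).det)
    (V W : Matrix (Fin n) (Fin r) ℂ)
    (hred : IsUnit (Wᴴ * (σ • E - A) * V).det)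
    (Ehat Ahat : Matrix (Fin r) (Fin r) ℂ) (bhat : Fin r → ℂ)
    (Chat : Matrix (Fin p) (Fin r) ℂ)
    (hE : Ehat = Wᴴ * E * V) (hA : Ahat = Wᴴ * A * V)
    (hb : bhat = Wᴴ.mulVec b) (hC : Chat = C * V)
    (G Ghat : ℂ → Fin p → ℂ)
    (hG : ∀ s : ℂ, G s = C.mulVec ((s • E - A)⁻¹.mulVec b))
    (hGhat : ∀ s : ℂ, Ghat s = Chat.mulVec ((s • Ehat - Ahat)⁻¹.mulVec bhat)) :
    ((∃ d : Fin r → ℂ, V.mulVec d = (σ • E - A)⁻¹.mulVec b) → G σ = Ghat σ) ∧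
      ((∃ d : Fin r → ℂ, W.mulVec d = ((σ • E - A)ᴴ)⁻¹.mulVec (Cᴴ.mulVec c)) →
        star c ⬝ᵥ G σ = star c ⬝ᵥ Ghat σ) := by

  have hKhat : σ • Ehat - Ahat = Wᴴ * (σ • E - A) * V := by
    rw [hE, hA]
    rw [Matrix.mul_sub, Matrix.sub_mul, Matrix.mul_smul, Matrix.smul_mul]
  have hKx : (σ • E - A).mulVec ((σ • E - A)⁻¹.mulVec b) = b := by
    rw [Matrix.mulVec_mulVec, Matrix.mul_nonsing_inv _ hpencil, Matrix.one_mulVec]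
  constructor
  · rintro ⟨d, hd⟩
    have h1 : (σ • Ehat - Ahat).mulVec d = bhat := by
      rw [hKhat, hb, ← Matrix.mulVec_mulVec, hd, ← Matrix.mulVec_mulVec, hKx]
    have h2 : (σ • Ehat - Ahat)⁻¹.mulVec bhat = d := by
      rw [← h1, Matrix.mulVec_mulVec]
      rw [Matrix.nonsing_inv_mul, Matrix.one_mulVec]
      rw [hKhat]; exact hred
    rw [hG, hGhat, h2, hC, ← Matrix.mulVec_mulVec, hd]
  · rintro ⟨d, hd⟩
    have hpH : IsUnit ((σ • E - A)ᴴ).det := by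
      rw [Matrix.det_conjTranspose]; exact hpencil.star
    have hu : (σ • E - A)ᴴ.mulVec (W.mulVec d) = Cᴴ.mulVec c := by
      rw [hd, Matrix.mulVec_mulVec, Matrix.mul_nonsing_inv _ hpH, Matrix.one_mulVec]
    have hKy : (σ • Ehat - Ahat).mulVec ((σ • Ehat - Ahat)⁻¹.mulVec bhat) = bhat := by
      rw [Matrix.mulVec_mulVec, Matrix.mul_nonsing_inv, Matrix.one_mulVec]
      rw [hKhat]; exact hred
    have key : ∀ (m : ℕ) (M : Matrix (Fin p) (Fin m) ℂ) (x : Fin m → ℂ),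
        star c ⬝ᵥ M.mulVec x = star (Mᴴ.mulVec c) ⬝ᵥ x := by
      intro m M x
      rw [Matrix.star_mulVec, Matrix.conjTranspose_conjTranspose,
        Matrix.dotProduct_mulVec]
    have hT : Vᴴ * (σ • E - A)ᴴ * W = (σ • Ehat - Ahat)ᴴ := by
      rw [hKhat]
      simp [Matrix.conjTranspose_mul, Matrix.mul_assoc]
    have hL : star c ⬝ᵥ G σ = star d ⬝ᵥ bhat := by
      rw [hG, key n _, ← hu, Matrix.star_mulVec, Matrix.conjTranspose_conjTranspose,
        ← Matrix.dotProduct_mulVec, hKx, Matrix.star_mulVec,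
        ← Matrix.dotProduct_mulVec, ← hb]
    have hR : star c ⬝ᵥ Ghat σ = star d ⬝ᵥ bhat := by
      rw [hGhat, key r _, hC, Matrix.conjTranspose_mul, ← Matrix.mulVec_mulVec, ← hu,
        Matrix.mulVec_mulVec, Matrix.mulVec_mulVec, hT, Matrix.star_mulVec,
        Matrix.conjTranspose_conjTranspose, ← Matrix.dotProduct_mulVec, hKy]
    rw [hL, hR]
end

section
/- Let E, A ∈ ℂ^{n×n}, b ∈ ℂ^n, and z₁,…,z_k ∈ ℂ points at which z_iE − A is invertible. Let V ∈ ℂ^{n×r} be a matrix whose column span contains all vectors (z_iE − A)^{-1}b, and let V' ∈ ℂ^{n×r} be any other matrix with the same column span (range(V') = range(V)) such that W^H(z_iE−A)V and W^H(z_iE−A)V' are invertible for some fixed W ∈ ℂ^{n×r}. Then the two reduced transfer functions Ĥ(z_i) built via (V,W) and (V',W) with Ê = W^H E V, Â = W^H A V, Q̂ = V^H Q V, b̂ = W^H b (and analogously for V') agree at every z_i, for any Hermitian Q ∈ ℂ^{n×n}: both equal H(z_i) = b^H(z_iE−A)^{-H}Q(z_iE−A)^{-1}b. -/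
open Matrix

private lemma aux_reduced_eq {n r : ℕ} (M Q : Matrix (Fin n) (Fin n) ℂ)
    (b : Fin n → ℂ) (hM : IsUnit M.det)
    (V W : Matrix (Fin n) (Fin r) ℂ) (c : Fin r → ℂ)
    (hc : V.mulVec c = M⁻¹.mulVec b)
    (hred : IsUnit (Wᴴ * M * V).det) :
    star (Wᴴ.mulVec b) ⬝ᵥ
        (((Wᴴ * M * V)ᴴ)⁻¹ * (Vᴴ * Q * V) * (Wᴴ * M * V)⁻¹).mulVec (Wᴴ.mulVec b)
      = star b ⬝ᵥ ((Mᴴ)⁻¹ * Q * M⁻¹).mulVec b := by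
  set A := Wᴴ * M * V with hA
  have hAc : A.mulVec c = Wᴴ.mulVec b := by
    rw [hA, ← Matrix.mulVec_mulVec, hc, Matrix.mulVec_mulVec, Matrix.mul_assoc,
      Matrix.mul_nonsing_inv _ hM, Matrix.mul_one]
  have hinvc : A⁻¹.mulVec (Wᴴ.mulVec b) = c := by
    rw [← hAc, Matrix.mulVec_mulVec, Matrix.nonsing_inv_mul _ hred,
      Matrix.one_mulVec]
  have key : ∀ (p q : ℕ) (B : Matrix (Fin p) (Fin q) ℂ) (Y : Matrix (Fin p) (Fin p) ℂ)
      (u : Fin q → ℂ), star u ⬝ᵥ (Bᴴ * Y * B).mulVec u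
        = star (B.mulVec u) ⬝ᵥ Y.mulVec (B.mulVec u) := by
    intro p q B Y u
    rw [← Matrix.mulVec_mulVec, ← Matrix.mulVec_mulVec,
      Matrix.dotProduct_mulVec, ← Matrix.star_mulVec, Matrix.dotProduct_mulVec,
      ← Matrix.dotProduct_mulVec]
  have h1 : star (Wᴴ.mulVec b) ⬝ᵥ ((Aᴴ)⁻¹ * (Vᴴ * Q * V) * A⁻¹).mulVec (Wᴴ.mulVec b)
      = star c ⬝ᵥ (Vᴴ * Q * V).mulVec c := by
    rw [← Matrix.conjTranspose_nonsing_inv]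
    have := key r r A⁻¹ (Vᴴ * Q * V) (Wᴴ.mulVec b)
    rw [hinvc] at this
    rw [← this]
  have h2 : star b ⬝ᵥ ((Mᴴ)⁻¹ * Q * M⁻¹).mulVec b
      = star (M⁻¹.mulVec b) ⬝ᵥ Q.mulVec (M⁻¹.mulVec b) := by
    rw [← Matrix.conjTranspose_nonsing_inv]
    exact key n n M⁻¹ Q b
  rw [h1, h2, key n r V Q c, hc]

/-- Interpolation via projection depends only on the projection
subspace: two basis matrices `V`, `V'` with the same column span (both containing
all `(zᵢE−A)⁻¹b`) yield reduced transfer functions that both equal `H(zᵢ)`. -/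
theorem interpolation_independent_of_basis (n r k : ℕ)
    (E A Q : Matrix (Fin n) (Fin n) ℂ) (hQ : Qᴴ = Q) (b : Fin n → ℂ)
    (z : Fin k → ℂ) (hpencil : ∀ i, IsUnit (z i • E - A).det)
    (V V' W : Matrix (Fin n) (Fin r) ℂ)
    (hrange : ∀ i, ∃ c : Fin r → ℂ, V.mulVec c = ((z i • E - A)⁻¹).mulVec b)
    (hspan : ∀ x : Fin n → ℂ,
      (∃ c : Fin r → ℂ, V.mulVec c = x) ↔ (∃ c : Fin r → ℂ, V'.mulVec c = x))
    (hred : ∀ i, IsUnit (Wᴴ * (z i • E - A) * V).det)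
    (hred' : ∀ i, IsUnit (Wᴴ * (z i • E - A) * V').det) :
    ∀ i : Fin k,
      (star (Wᴴ.mulVec b) ⬝ᵥ
          (((z i • (Wᴴ * E * V) - Wᴴ * A * V)ᴴ)⁻¹ * (Vᴴ * Q * V) *
            (z i • (Wᴴ * E * V) - Wᴴ * A * V)⁻¹).mulVec (Wᴴ.mulVec b)
        = star b ⬝ᵥ (((z i • E - A)ᴴ)⁻¹ * Q * (z i • E - A)⁻¹).mulVec b) ∧
      (star (Wᴴ.mulVec b) ⬝ᵥ
          (((z i • (Wᴴ * E * V') - Wᴴ * A * V')ᴴ)⁻¹ * (V'ᴴ * Q * V') *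
            (z i • (Wᴴ * E * V') - Wᴴ * A * V')⁻¹).mulVec (Wᴴ.mulVec b)
        = star b ⬝ᵥ (((z i • E - A)ᴴ)⁻¹ * Q * (z i • E - A)⁻¹).mulVec b) := by
  intro i
  have hM : ∀ U : Matrix (Fin n) (Fin r) ℂ,
      z i • (Wᴴ * E * U) - Wᴴ * A * U = Wᴴ * (z i • E - A) * U := by
    intro U
    rw [Matrix.mul_sub, Matrix.sub_mul, Matrix.mul_smul, Matrix.smul_mul]
  obtain ⟨c, hc⟩ := hrange i
  obtain ⟨c', hc'⟩ := (hspan _).mp ⟨c, hc⟩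
  constructor
  · rw [hM V]
    exact aux_reduced_eq _ Q b (hpencil i) V W c hc (hred i)
  · rw [hM V']
    exact aux_reduced_eq _ Q b (hpencil i) V' W c' hc' (hred' i)
end
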